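/- Let c be a natural number, let w be a Gauss word of length 2c, and let j, j' : Fin (2c) be distinct positions with w j = w j' (the two positions of the same letter). Then for every assignment x, position j is passed over if and only if position j' is passed under; consequently, defining the step step_b(x) = d_{b+1}(x) − d_b(x) (indices mod 2c), one has step_j(x) + step_{j'}(x) = 0 for every assignment x, i.e., the j-th and j'-th columns of the ±1 step matrix sum to the zero column. -/
import Mathlib


namespace Warping

/-- A Gauss word of length `2c`: every letter occurs at exactly two positions. -/
def IsGaussWord (c : ℕ) (w : Fin (2*c) → Fin c) : Prop :=
  ∀ i : Fin c, (Finset.univ.filter (fun j => w j = i)).card = 2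

/-- The cyclic successor of an index. -/
def next {n : ℕ} (b : Fin n) : Fin n :=
  ⟨((b : ℕ) + 1) % n, Nat.mod_lt _ (Nat.lt_of_le_of_lt (Nat.zero_le _) b.isLt)⟩

/-- `j` is the first (smaller) of the two positions of its letter. -/
def isFirst (c : ℕ) (w : Fin (2*c) → Fin c) (j : Fin (2*c)) : Prop :=
  ∀ j' : Fin (2*c), w j' = w j → j ≤ j'

/-- Under the assignment `x`, position `j` is passed under. -/
def passedUnder (c : ℕ) (w : Fin (2*c) → Fin c) (x : Fin c → Bool) (j : Fin (2*c)) : Prop :=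
  (x (w j) = true) ↔ isFirst c w j

/-- Time at which position `j` is met in the cyclic traversal starting at base `b`. -/
def time (c : ℕ) (b j : Fin (2*c)) : ℕ := ((j : ℕ) + 2*c - (b : ℕ)) % (2*c)

/-- The letter `i` is a warping crossing for assignment `x` and base `b`: the position of `i`
met earlier in the cyclic traversal starting at `b` is passed under. -/
def IsWarpingCrossing (c : ℕ) (w : Fin (2*c) → Fin c) (x : Fin c → Bool)
    (b : Fin (2*c)) (i : Fin c) : Prop :=
  ∃ j : Fin (2*c), w j = i ∧ (∀ j' : Fin (2*c), w j' = i → time c b j ≤ time c b j') ∧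
    passedUnder c w x j

open scoped Classical in
/-- The warping degree of the assignment `x` with base point `b`. -/
noncomputable def warpingDegree (c : ℕ) (w : Fin (2*c) → Fin c) (x : Fin c → Bool)
    (b : Fin (2*c)) : ℕ :=
  (Finset.univ.filter (fun i => IsWarpingCrossing c w x b i)).card

/-- The step `d_{b+1}(x) - d_b(x)` of the warping degree sequence. -/
noncomputable def step (c : ℕ) (w : Fin (2*c) → Fin c) (x : Fin c → Bool) (b : Fin (2*c)) : ℤ :=
  (warpingDegree c w x (next b) : ℤ) - (warpingDegree c w x b : ℤ)

-- Auxiliary lemmas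
lemma time_eq (c : ℕ) (b k : Fin (2*c)) :
    time c b k = if (b:ℕ) ≤ (k:ℕ) then (k:ℕ) - (b:ℕ) else (k:ℕ) + 2*c - (b:ℕ) := by
  unfold time
  have hb := b.isLt
  have hk := k.isLt
  split
  · next h =>
    have he : (k:ℕ) + 2*c - (b:ℕ) = ((k:ℕ) - (b:ℕ)) + 2*c := by omega
    rw [he, Nat.add_mod_right]
    exact Nat.mod_eq_of_lt (by omega)
  · next h =>
    exact Nat.mod_eq_of_lt (by omega)

lemma time_self (c : ℕ) (b : Fin (2*c)) : time c b b = 0 := by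
  rw [time_eq]; simp

lemma time_lt (c : ℕ) (b k : Fin (2*c)) : time c b k < 2*c := by
  rw [time_eq]
  have hb := b.isLt; have hk := k.isLt
  split <;> omega

lemma time_inj (c : ℕ) (b k k' : Fin (2*c)) (h : time c b k = time c b k') : k = k' := by
  rw [time_eq, time_eq] at h
  have hb := b.isLt; have hk := k.isLt; have hk' := k'.isLt
  apply Fin.ext
  split at h <;> split at h <;> omega

lemma time_next (c : ℕ) (b k : Fin (2*c)) (h : (k:ℕ) ≠ (b:ℕ)) :
    time c (next b) k + 1 = time c b k := by
  have hb := b.isLt; have hk := k.isLt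
  have hnv : (next b : ℕ) = ((b:ℕ)+1) % (2*c) := rfl
  rcases Nat.lt_or_ge ((b:ℕ)+1) (2*c) with hb1 | hb1
  · have h1 : (next b : ℕ) = (b:ℕ)+1 := by rw [hnv, Nat.mod_eq_of_lt hb1]
    rw [time_eq, time_eq, h1]
    split <;> split <;> omega
  · have h1 : (next b : ℕ) = 0 := by
      rw [hnv, show (b:ℕ)+1 = 2*c from by omega, Nat.mod_self]
    rw [time_eq, time_eq, h1]
    split <;> split <;> omega

lemma time_next_self (c : ℕ) (b : Fin (2*c)) : time c (next b) b = 2*c - 1 := by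
  have hb := b.isLt
  have hnv : (next b : ℕ) = ((b:ℕ)+1) % (2*c) := rfl
  rcases Nat.lt_or_ge ((b:ℕ)+1) (2*c) with hb1 | hb1
  · have h1 : (next b : ℕ) = (b:ℕ)+1 := by rw [hnv, Nat.mod_eq_of_lt hb1]
    rw [time_eq, h1]; split <;> omega
  · have h1 : (next b : ℕ) = 0 := by
      rw [hnv, show (b:ℕ)+1 = 2*c from by omega, Nat.mod_self]
    rw [time_eq, h1]; split <;> omega

lemma positions_pair (c : ℕ) (w : Fin (2*c) → Fin c) (hw : IsGaussWord c w)
    (j j' : Fin (2*c)) (hjj' : j ≠ j') (hww : w j = w j') (k : Fin (2*c))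
    (hk : w k = w j) : k = j ∨ k = j' := by
  classical
  by_contra hcon
  push_neg at hcon
  have hcard := hw (w j)
  have hsub : ({j, j', k} : Finset (Fin (2*c))) ⊆ Finset.univ.filter (fun a => w a = w j) := by
    intro a ha
    simp only [Finset.mem_insert, Finset.mem_singleton] at ha
    simp only [Finset.mem_filter, Finset.mem_univ, true_and]
    rcases ha with rfl | rfl | rfl
    · rfl
    · exact hww.symm
    · exact hk
  have h3 : ({j, j', k} : Finset (Fin (2*c))).card = 3 := by
    rw [Finset.card_insert_of_notMem (by simp [hjj', Ne.symm hcon.1]),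
      Finset.card_insert_of_notMem (by simp [Ne.symm hcon.2]), Finset.card_singleton]
  have hle := Finset.card_le_card hsub
  omega

lemma cross_not_base (c : ℕ) (w : Fin (2*c) → Fin c) (x : Fin c → Bool) (b : Fin (2*c))
    (i : Fin c) (hib : i ≠ w b) :
    IsWarpingCrossing c w x (next b) i ↔ IsWarpingCrossing c w x b i := by
  have hvne : ∀ k : Fin (2*c), w k = i → (k:ℕ) ≠ (b:ℕ) := by
    intro k hk h
    apply hib
    rw [← hk]
    exact congrArg w (Fin.ext h)
  constructor
  · rintro ⟨k, hk, hmin, hu⟩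
    refine ⟨k, hk, ?_, hu⟩
    intro k' hk'
    have h1 := time_next c b k (hvne k hk)
    have h2 := time_next c b k' (hvne k' hk')
    have h3 := hmin k' hk'
    omega
  · rintro ⟨k, hk, hmin, hu⟩
    refine ⟨k, hk, ?_, hu⟩
    intro k' hk'
    have h1 := time_next c b k (hvne k hk)
    have h2 := time_next c b k' (hvne k' hk')
    have h3 := hmin k' hk'
    omega

lemma cross_base (c : ℕ) (w : Fin (2*c) → Fin c) (x : Fin c → Bool) (b : Fin (2*c)) :
    IsWarpingCrossing c w x b (w b) ↔ passedUnder c w x b := by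
  constructor
  · rintro ⟨k, hk, hmin, hu⟩
    have h0 : time c b k = 0 := by
      have := hmin b rfl
      rw [time_self] at this
      omega
    have hkb : k = b := time_inj c b k b (by rw [h0, time_self])
    rwa [← hkb]
  · intro hu
    exact ⟨b, rfl, fun k' _ => by rw [time_self]; exact Nat.zero_le _, hu⟩

lemma cross_next (c : ℕ) (w : Fin (2*c) → Fin c) (hw : IsGaussWord c w)
    (j j' : Fin (2*c)) (hjj' : j ≠ j') (hww : w j = w j') (x : Fin c → Bool) :
    IsWarpingCrossing c w x (next j) (w j) ↔ passedUnder c w x j' := by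
  have hmax : time c (next j) j = 2*c - 1 := time_next_self c j
  have hlt : time c (next j) j' < 2*c - 1 := by
    have h1 : time c (next j) j' < 2*c := time_lt c (next j) j'
    have h2 : time c (next j) j' ≠ 2*c - 1 := by
      intro h
      exact hjj'.symm (time_inj c (next j) j' j (by rw [h, hmax]))
    omega
  constructor
  · rintro ⟨k, hk, hmin, hu⟩
    rcases positions_pair c w hw j j' hjj' hww k hk with rfl | rfl
    · have h := hmin j' hww.symm
      omega
    · exact hu
  · intro hu
    refine ⟨j', hww.symm, ?_, hu⟩
    intro k' hk'
    rcases positions_pair c w hw j j' hjj' hww k' hk' with rfl | rfl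
    · omega
    · exact le_refl _

open scoped Classical in
lemma step_eq (c : ℕ) (w : Fin (2*c) → Fin c) (hw : IsGaussWord c w)
    (j j' : Fin (2*c)) (hjj' : j ≠ j') (hww : w j = w j') (x : Fin c → Bool) :
    step c w x j = (if passedUnder c w x j' then 1 else 0)
      - (if passedUnder c w x j then 1 else 0) := by
  classical
  unfold step warpingDegree
  rw [Finset.card_filter, Finset.card_filter]
  push_cast
  rw [← Finset.sum_sub_distrib]
  rw [Finset.sum_eq_single (w j)]
  · simp only [cross_next c w hw j j' hjj' hww x, cross_base c w x j]
  · intro i _ hi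
    simp only [cross_not_base c w x j i hi, sub_self]
  · intro h
    exact absurd (Finset.mem_univ _) h

/-- The two positions of one letter have opposite pass types, and hence the corresponding
two columns of the ±1 step matrix sum to the zero column. -/
theorem step_add_step_of_same_letter (c : ℕ) (w : Fin (2*c) → Fin c)
    (hw : IsGaussWord c w) (j j' : Fin (2*c)) (hjj' : j ≠ j') (hww : w j = w j') :
    ∀ x : Fin c → Bool,
      (¬ passedUnder c w x j ↔ passedUnder c w x j') ∧
      step c w x j + step c w x j' = 0 := by
  intro x
  constructor
  · have hfirst : isFirst c w j ↔ j ≤ j' := by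
      constructor
      · intro h; exact h j' hww.symm
      · intro h k hk
        rcases positions_pair c w hw j j' hjj' hww k hk with rfl | rfl
        · exact le_refl _
        · exact h
    have hfirst' : isFirst c w j' ↔ j' ≤ j := by
      constructor
      · intro h; exact h j hww
      · intro h k hk
        rcases positions_pair c w hw j' j hjj'.symm hww.symm k hk with rfl | rfl
        · exact le_refl _
        · exact h
    unfold passedUnder
    rw [hww, hfirst, hfirst', Fin.le_def, Fin.le_def]
    have hvne : (j:ℕ) ≠ (j':ℕ) := fun h => hjj' (Fin.ext h)
    by_cases hx : x (w j') = true <;> simp [hx] <;> omega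
  · rw [step_eq c w hw j j' hjj' hww x, step_eq c w hw j' j hjj'.symm hww.symm x]
    ring


end Warping
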